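/- Suppose w ∈ C^2(Σ) ∩ C^0(closure Σ) satisfies −Δw = c(x) w on the strip Σ = R^{n−1} × (0, δ) with ‖c‖_∞ ≤ C_0, w ≤ 0 on ∂Σ, w bounded, and δ² C_0 < π²/4 (narrowness). Then w ≤ 0 in Σ. -/

import Mathlib

open Real Filter Set Topology

noncomputable def lap {m : ℕ} (u : EuclideanSpace ℝ (Fin m) → ℝ)
    (x : EuclideanSpace ℝ (Fin m)) : ℝ :=
  ∑ i, fderiv ℝ (fun y => fderiv ℝ u y (EuclideanSpace.single i 1)) x (EuclideanSpace.single i 1)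

section Aux

lemma second_deriv_test_nonpos {q : ℝ → ℝ} {d : ℝ}
    (hmax : IsLocalMax q 0)
    (hdiff : ∀ᶠ t in 𝓝 (0:ℝ), DifferentiableAt ℝ q t)
    (hq2 : HasDerivAt (deriv q) d 0) : d ≤ 0 := by
  by_contra hd
  push_neg at hd
  have h0 : deriv q 0 = 0 := hmax.deriv_eq_zero
  have hslope : Tendsto (slope (deriv q) 0) (𝓝[≠] (0:ℝ)) (𝓝 d) :=
    hasDerivAt_iff_tendsto_slope.mp hq2
  have hev : ∀ᶠ t in 𝓝[≠] (0:ℝ), d/2 < slope (deriv q) 0 t :=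
    hslope.eventually (eventually_gt_nhds (by linarith))
  rw [eventually_nhdsWithin_iff] at hev
  have hmax' : ∀ᶠ t in 𝓝 (0:ℝ), q t ≤ q 0 := hmax
  have hall := hmax'.and (hdiff.and hev)
  rw [Metric.eventually_nhds_iff] at hall
  obtain ⟨ε, hε, hP⟩ := hall
  have ht0pos : 0 < ε/2 := by positivity
  have hmono : StrictMonoOn q (Icc 0 (ε/2)) := by
    apply strictMonoOn_of_deriv_pos (convex_Icc 0 (ε/2))
    · intro t ht
      have hd1 : dist t 0 < ε := by
        rw [Real.dist_eq, sub_zero, abs_of_nonneg ht.1]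
        linarith [ht.2]
      exact ((hP hd1).2.1).continuousAt.continuousWithinAt
    · intro t ht
      rw [interior_Icc] at ht
      have hd1 : dist t 0 < ε := by
        rw [Real.dist_eq, sub_zero, abs_of_nonneg ht.1.le]
        linarith [ht.2]
      have hne : t ∈ ({0}ᶜ : Set ℝ) := by simp [ht.1.ne']
      have hs := (hP hd1).2.2 hne
      rw [slope_def_field, h0, sub_zero, sub_zero] at hs
      have h2 : d/2 * t < deriv q t := (lt_div_iff₀ ht.1).mp hs
      nlinarith [ht.1]
  have hc : q 0 < q (ε/2) :=
    hmono (left_mem_Icc.mpr ht0pos.le) (right_mem_Icc.mpr ht0pos.le) ht0pos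
  have hle : q (ε/2) ≤ q 0 := by
    refine (hP ?_).1
    rw [Real.dist_eq, sub_zero, abs_of_nonneg ht0pos.le]
    linarith
  linarith

lemma lap_nonpos_of_isLocalMax {m : ℕ} {u : EuclideanSpace ℝ (Fin m) → ℝ}
    {U : Set (EuclideanSpace ℝ (Fin m))} (hU : IsOpen U)
    {z : EuclideanSpace ℝ (Fin m)} (hz : z ∈ U)
    (hu : ContDiffOn ℝ 2 u U) (hmax : IsLocalMax u z) : lap u z ≤ 0 := by
  have hud : DifferentiableOn ℝ u U := hu.differentiableOn (by norm_num)
  have hfd : ContDiffOn ℝ 1 (fderiv ℝ u) U := hu.fderiv_of_isOpen hU (by norm_num)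
  apply Finset.sum_nonpos
  intro k _
  set ek : EuclideanSpace ℝ (Fin m) := EuclideanSpace.single k 1 with hek
  set F : EuclideanSpace ℝ (Fin m) → ℝ := fun y => fderiv ℝ u y ek with hF
  have hFd : DifferentiableAt ℝ F z := by
    have h1 : DifferentiableAt ℝ (fderiv ℝ u) z :=
      ((hfd z hz).differentiableWithinAt one_ne_zero).differentiableAt (hU.mem_nhds hz)
    exact h1.clm_apply (differentiableAt_const _)
  set L : ℝ → EuclideanSpace ℝ (Fin m) := fun t => z + t • ek with hL
  have hL0 : L 0 = z := by simp [hL]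
  have hLc : Continuous L := continuous_const.add (continuous_id.smul continuous_const)
  have hLt : Tendsto L (𝓝 0) (𝓝 z) := by
    have h := hLc.continuousAt (x := (0:ℝ))
    rwa [ContinuousAt, hL0] at h
  have hmem : ∀ᶠ t in 𝓝 (0:ℝ), L t ∈ U := hLt.eventually (hU.eventually_mem hz)
  have hLd : ∀ t : ℝ, HasDerivAt L ek t := by
    intro t
    simpa [hL] using ((hasDerivAt_id t).smul_const ek).const_add z
  set q : ℝ → ℝ := fun t => u (L t) with hq
  have hqd : ∀ᶠ t in 𝓝 (0:ℝ), HasDerivAt q (F (L t)) t := by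
    filter_upwards [hmem] with t ht
    exact ((hud.differentiableAt (hU.mem_nhds ht)).hasFDerivAt).comp_hasDerivAt t (hLd t)
  have hqdiff : ∀ᶠ t in 𝓝 (0:ℝ), DifferentiableAt ℝ q t :=
    hqd.mono fun t h => h.differentiableAt
  have hder : deriv q =ᶠ[𝓝 (0:ℝ)] fun t => F (L t) := hqd.mono fun t h => h.deriv
  have hFz : HasFDerivAt F (fderiv ℝ F z) (L 0) := hL0.symm ▸ hFd.hasFDerivAt
  have hFL : HasDerivAt (fun t => F (L t)) (fderiv ℝ F z ek) 0 :=
    hFz.comp_hasDerivAt 0 (hLd 0)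
  have hq2 : HasDerivAt (deriv q) (fderiv ℝ F z ek) 0 :=
    hFL.congr_of_eventuallyEq hder
  have hqmax : IsLocalMax q 0 := by
    have h := hLt.eventually hmax
    filter_upwards [h] with t ht
    simpa [hq, hL0] using ht
  exact second_deriv_test_nonpos hqmax hqdiff hq2

noncomputable def phi (α δ t : ℝ) : ℝ := Real.cos (α * (t - δ / 2))
noncomputable def phi' (α δ t : ℝ) : ℝ := -Real.sin (α * (t - δ / 2)) * α
noncomputable def psi (β t : ℝ) : ℝ := Real.cosh (β * t)
noncomputable def psi' (β t : ℝ) : ℝ := Real.sinh (β * t) * β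

lemma hasDerivAt_aff (α δ t : ℝ) : HasDerivAt (fun s : ℝ => α * (s - δ/2)) α t := by
  simpa using ((hasDerivAt_id t).sub_const (δ/2)).const_mul α

lemma hasDerivAt_phi (α δ t : ℝ) : HasDerivAt (phi α δ) (phi' α δ t) t := by
  unfold phi
  simpa [phi, phi', Function.comp_def] using
    (Real.hasDerivAt_cos (α * (t - δ/2))).comp t (hasDerivAt_aff α δ t)

lemma hasDerivAt_phi' (α δ t : ℝ) : HasDerivAt (phi' α δ) (-(α^2) * phi α δ t) t := by
  have h2 := (Real.hasDerivAt_sin (α * (t - δ/2))).comp t (hasDerivAt_aff α δ t)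
  have h3 := (h2.neg).mul_const α
  refine h3.congr_deriv ?_
  simp only [phi]
  ring

lemma hasDerivAt_lin (β t : ℝ) : HasDerivAt (fun s : ℝ => β * s) β t := by
  simpa using (hasDerivAt_id t).const_mul β

lemma hasDerivAt_psi (β t : ℝ) : HasDerivAt (psi β) (psi' β t) t := by
  unfold psi
  simpa [psi, psi', Function.comp_def] using
    (Real.hasDerivAt_cosh (β * t)).comp t (hasDerivAt_lin β t)

lemma hasDerivAt_psi' (β t : ℝ) : HasDerivAt (psi' β) (β^2 * psi β t) t := by
  have h2 := ((Real.hasDerivAt_sinh (β * t)).comp t (hasDerivAt_lin β t)).mul_const β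
  refine h2.congr_deriv ?_
  simp only [psi]
  ring

lemma contDiff_phi (α δ : ℝ) : ContDiff ℝ 2 (phi α δ) :=
  Real.contDiff_cos.comp (contDiff_const.mul (contDiff_id.sub contDiff_const))

lemma contDiff_psi (β : ℝ) : ContDiff ℝ 2 (psi β) :=
  Real.contDiff_cosh.comp (contDiff_const.mul contDiff_id)

lemma hasFDerivAt_coord {m : ℕ} (i : Fin m) (x : EuclideanSpace ℝ (Fin m)) :
    HasFDerivAt (fun y : EuclideanSpace ℝ (Fin m) => y i)
      (EuclideanSpace.proj i : EuclideanSpace ℝ (Fin m) →L[ℝ] ℝ) x := by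
  have h := (EuclideanSpace.proj i : EuclideanSpace ℝ (Fin m) →L[ℝ] ℝ).hasFDerivAt (x := x)
  exact h

variable {n : ℕ}

noncomputable def Gf (β : ℝ) (x : EuclideanSpace ℝ (Fin (n+1))) : ℝ :=
  1 + ∑ m : Fin n, psi β (x m.castSucc)

noncomputable def gf (α β δ : ℝ) (x : EuclideanSpace ℝ (Fin (n+1))) : ℝ :=
  phi α δ (x (Fin.last n)) * Gf β x

noncomputable def DG (β : ℝ) (x : EuclideanSpace ℝ (Fin (n+1))) :
    EuclideanSpace ℝ (Fin (n+1)) →L[ℝ] ℝ :=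
  ∑ m : Fin n, psi' β (x m.castSucc) • (EuclideanSpace.proj (m.castSucc : Fin (n+1)))

noncomputable def Dphi (α δ : ℝ) (x : EuclideanSpace ℝ (Fin (n+1))) :
    EuclideanSpace ℝ (Fin (n+1)) →L[ℝ] ℝ :=
  phi' α δ (x (Fin.last n)) • (EuclideanSpace.proj (Fin.last n))

lemma hasFDerivAt_Gf (β : ℝ) (x : EuclideanSpace ℝ (Fin (n+1))) :
    HasFDerivAt (Gf β) (DG β x) x := by
  apply HasFDerivAt.const_add
  exact HasFDerivAt.fun_sum fun (m : Fin n) _ =>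
    (hasDerivAt_psi β (x m.castSucc)).comp_hasFDerivAt (h₂ := psi β) x (hasFDerivAt_coord _ x)

lemma hasFDerivAt_phiL (α δ : ℝ) (x : EuclideanSpace ℝ (Fin (n+1))) :
    HasFDerivAt (fun y : EuclideanSpace ℝ (Fin (n+1)) => phi α δ (y (Fin.last n)))
      (Dphi α δ x) x :=
  (hasDerivAt_phi α δ (x (Fin.last n))).comp_hasFDerivAt (h₂ := phi α δ) x (hasFDerivAt_coord _ x)

lemma hasFDerivAt_gf (α β δ : ℝ) (x : EuclideanSpace ℝ (Fin (n+1))) :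
    HasFDerivAt (gf α β δ (n := n))
      (phi α δ (x (Fin.last n)) • DG β x + Gf β x • Dphi α δ x) x :=
  (hasFDerivAt_phiL α δ x).mul (hasFDerivAt_Gf β x)

lemma DG_last (β : ℝ) (x : EuclideanSpace ℝ (Fin (n+1))) :
    DG β x (EuclideanSpace.single (Fin.last n) 1) = 0 := by
  simp only [DG, ContinuousLinearMap.sum_apply, ContinuousLinearMap.smul_apply,
    PiLp.proj_apply, EuclideanSpace.single_apply, smul_eq_mul]
  apply Finset.sum_eq_zero
  intro m _
  rw [if_neg (Fin.castSucc_lt_last m).ne, mul_zero]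

lemma DG_cast (β : ℝ) (x : EuclideanSpace ℝ (Fin (n+1))) (m : Fin n) :
    DG β x (EuclideanSpace.single m.castSucc 1) = psi' β (x m.castSucc) := by
  simp only [DG, ContinuousLinearMap.sum_apply, ContinuousLinearMap.smul_apply,
    PiLp.proj_apply, EuclideanSpace.single_apply, smul_eq_mul]
  rw [Finset.sum_eq_single m]
  · simp
  · intro b _ hb
    rw [if_neg (by simpa [Fin.castSucc_inj] using hb), mul_zero]
  · intro h; exact absurd (Finset.mem_univ m) h

lemma Dphi_last (α δ : ℝ) (x : EuclideanSpace ℝ (Fin (n+1))) :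
    Dphi α δ x (EuclideanSpace.single (Fin.last n) 1) = phi' α δ (x (Fin.last n)) := by
  simp [Dphi, EuclideanSpace.single_apply]

lemma Dphi_cast (α δ : ℝ) (x : EuclideanSpace ℝ (Fin (n+1))) (m : Fin n) :
    Dphi α δ x (EuclideanSpace.single m.castSucc 1) = 0 := by
  simp [Dphi, EuclideanSpace.single_apply, if_neg (Fin.castSucc_lt_last m).ne']

lemma fderiv_gf_last (α β δ : ℝ) :
    (fun y : EuclideanSpace ℝ (Fin (n+1)) =>
        fderiv ℝ (gf α β δ) y (EuclideanSpace.single (Fin.last n) 1))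
      = fun y => Gf β y * phi' α δ (y (Fin.last n)) := by
  funext y
  rw [(hasFDerivAt_gf α β δ y).fderiv]
  simp [DG_last, Dphi_last]

lemma fderiv_gf_cast (α β δ : ℝ) (m : Fin n) :
    (fun y : EuclideanSpace ℝ (Fin (n+1)) =>
        fderiv ℝ (gf α β δ) y (EuclideanSpace.single m.castSucc 1))
      = fun y => phi α δ (y (Fin.last n)) * psi' β (y m.castSucc) := by
  funext y
  rw [(hasFDerivAt_gf α β δ y).fderiv]
  simp [DG_cast, Dphi_cast]

lemma lap_gf (α β δ : ℝ) (x : EuclideanSpace ℝ (Fin (n+1))) :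
    lap (gf α β δ) x = -(α^2) * phi α δ (x (Fin.last n)) * Gf β x
      + β^2 * phi α δ (x (Fin.last n)) * (Gf β x - 1) := by
  unfold lap
  rw [Fin.sum_univ_castSucc]
  have hlast : fderiv ℝ (fun y : EuclideanSpace ℝ (Fin (n+1)) =>
      fderiv ℝ (gf α β δ) y (EuclideanSpace.single (Fin.last n) 1)) x
      (EuclideanSpace.single (Fin.last n) 1)
      = Gf β x * (-(α^2) * phi α δ (x (Fin.last n))) := by
    rw [fderiv_gf_last]
    have h : HasFDerivAt (fun y : EuclideanSpace ℝ (Fin (n+1)) =>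
        Gf β y * phi' α δ (y (Fin.last n)))
        (Gf β x • ((-(α^2) * phi α δ (x (Fin.last n))) • (EuclideanSpace.proj (Fin.last n) :
          EuclideanSpace ℝ (Fin (n+1)) →L[ℝ] ℝ))
          + phi' α δ (x (Fin.last n)) • DG β x) x :=
      (hasFDerivAt_Gf β x).mul
        ((hasDerivAt_phi' α δ (x (Fin.last n))).comp_hasFDerivAt (h₂ := phi' α δ) x (hasFDerivAt_coord _ x))
    rw [h.fderiv]
    simp [DG_last, EuclideanSpace.single_apply]
  have hcast : ∀ m : Fin n, fderiv ℝ (fun y : EuclideanSpace ℝ (Fin (n+1)) =>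
      fderiv ℝ (gf α β δ) y (EuclideanSpace.single m.castSucc 1)) x
      (EuclideanSpace.single m.castSucc 1)
      = phi α δ (x (Fin.last n)) * (β^2 * psi β (x m.castSucc)) := by
    intro m
    rw [fderiv_gf_cast]
    have h : HasFDerivAt (fun y : EuclideanSpace ℝ (Fin (n+1)) =>
        phi α δ (y (Fin.last n)) * psi' β (y m.castSucc))
        (phi α δ (x (Fin.last n)) • ((β^2 * psi β (x m.castSucc)) •
          (EuclideanSpace.proj (m.castSucc : Fin (n+1)) :
            EuclideanSpace ℝ (Fin (n+1)) →L[ℝ] ℝ))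
          + psi' β (x m.castSucc) • Dphi α δ x) x :=
      (hasFDerivAt_phiL α δ x).mul
        ((hasDerivAt_psi' β (x m.castSucc)).comp_hasFDerivAt (h₂ := psi' β) x (hasFDerivAt_coord _ x))
    rw [h.fderiv]
    simp [Dphi_cast, EuclideanSpace.single_apply]
  rw [hlast, Finset.sum_congr rfl fun m _ => hcast m]
  have hsum : ∑ m : Fin n, phi α δ (x (Fin.last n)) * (β ^ 2 * psi β (x m.castSucc))
      = β^2 * phi α δ (x (Fin.last n)) * ∑ m : Fin n, psi β (x m.castSucc) := by
    rw [Finset.mul_sum]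
    exact Finset.sum_congr rfl fun m _ => by ring
  rw [hsum, Gf]
  ring

lemma contDiff_gf (α β δ : ℝ) : ContDiff ℝ 2 (gf α β δ (n := n)) := by
  apply ContDiff.mul
  · exact (contDiff_phi α δ).comp (contDiff_piLp_apply _)
  · exact contDiff_const.add (ContDiff.sum fun m _ =>
      (contDiff_psi β).comp (contDiff_piLp_apply _))

end Aux

set_option maxHeartbeats 1000000 in
/-- quantitative maximum principle in the narrow strip
`Σ = ℝ^{n-1} × (0, δ)` for `-Δw = c(x) w` with `‖c‖_∞ ≤ C₀` and `δ² C₀ < π²/4`. -/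
theorem stmt13 {n : ℕ} (δ C0 : ℝ) (hδ : 0 < δ)
    (c w : EuclideanSpace ℝ (Fin (n + 1)) → ℝ)
    (hw2 : ContDiffOn ℝ 2 w {x | 0 < x (Fin.last n) ∧ x (Fin.last n) < δ})
    (hwc : ContinuousOn w (closure {x : EuclideanSpace ℝ (Fin (n + 1)) |
      0 < x (Fin.last n) ∧ x (Fin.last n) < δ}))
    (heq : ∀ x : EuclideanSpace ℝ (Fin (n + 1)), 0 < x (Fin.last n) → x (Fin.last n) < δ →
      -lap w x = c x * w x)
    (hc : ∀ x, |c x| ≤ C0)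
    (hbd : ∃ M : ℝ, ∀ x, |w x| ≤ M)
    (hbdry : ∀ x ∈ frontier {x : EuclideanSpace ℝ (Fin (n + 1)) |
      0 < x (Fin.last n) ∧ x (Fin.last n) < δ}, w x ≤ 0)
    (hnarrow : δ ^ 2 * C0 < π ^ 2 / 4) :
    ∀ x : EuclideanSpace ℝ (Fin (n + 1)), 0 < x (Fin.last n) → x (Fin.last n) < δ →
      w x ≤ 0 := by
  intro x0 hx01 hx02
  by_contra hpos
  push_neg at hpos
  obtain ⟨M, hM⟩ := hbd
  set Sig : Set (EuclideanSpace ℝ (Fin (n+1))) :=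
    {x | 0 < x (Fin.last n) ∧ x (Fin.last n) < δ} with hSig
  have hproj : Continuous fun x : EuclideanSpace ℝ (Fin (n+1)) => x (Fin.last n) :=
    (EuclideanSpace.proj (Fin.last n) : EuclideanSpace ℝ (Fin (n+1)) →L[ℝ] ℝ).continuous
  have hopen : IsOpen Sig := by
    have h : Sig = (fun x : EuclideanSpace ℝ (Fin (n+1)) => x (Fin.last n)) ⁻¹' Ioo 0 δ := rfl
    rw [h]; exact isOpen_Ioo.preimage hproj
  have hclsub : closure Sig ⊆ {x : EuclideanSpace ℝ (Fin (n+1)) |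
      0 ≤ x (Fin.last n) ∧ x (Fin.last n) ≤ δ} := by
    refine closure_minimal (fun x (hx : 0 < x (Fin.last n) ∧ x (Fin.last n) < δ) =>
      (show 0 ≤ x (Fin.last n) ∧ x (Fin.last n) ≤ δ from ⟨hx.1.le, hx.2.le⟩)) ?_
    have h : {x : EuclideanSpace ℝ (Fin (n+1)) | 0 ≤ x (Fin.last n) ∧ x (Fin.last n) ≤ δ}
        = (fun x : EuclideanSpace ℝ (Fin (n+1)) => x (Fin.last n)) ⁻¹' Icc 0 δ := rfl
    rw [h]; exact isClosed_Icc.preimage hproj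
  have hπ := Real.pi_pos
  set α := π / (2*δ) with hα
  have hαpos : 0 < α := by rw [hα]; positivity
  have hC0 : C0 < α^2 := by
    have h2 : α^2 = π^2/4/δ^2 := by rw [hα]; field_simp; ring
    rw [h2, lt_div_iff₀ (by positivity : (0:ℝ) < δ^2)]
    linarith
  set ε0 := α^2 - C0 with hε0
  have hε0pos : 0 < ε0 := by rw [hε0]; linarith
  set β := Real.sqrt (ε0/2) with hβ
  have hβpos : 0 < β := by rw [hβ]; exact Real.sqrt_pos.mpr (by linarith)
  have hβ2 : β^2 = ε0/2 := by rw [hβ]; exact Real.sq_sqrt (by linarith)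
  set c₀ := Real.cos (π/4) with hc₀
  have hc₀pos : 0 < c₀ := by
    rw [hc₀, Real.cos_pi_div_four]; positivity
  clear_value α ε0 β c₀
  have hphi_lb : ∀ t : ℝ, 0 ≤ t → t ≤ δ → c₀ ≤ phi α δ t := by
    intro t h1 h2
    have habs : |α * (t - δ/2)| ≤ π/4 := by
      rw [abs_mul, abs_of_nonneg hαpos.le]
      have h3 : |t - δ/2| ≤ δ/2 := abs_le.mpr ⟨by linarith, by linarith⟩
      have h4 : α * (δ/2) = π/4 := by rw [hα]; field_simp; ring
      have h5 := mul_le_mul_of_nonneg_left h3 hαpos.le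
      linarith
    show c₀ ≤ Real.cos (α * (t - δ/2))
    rw [hc₀, ← Real.cos_abs (α * (t - δ/2))]
    exact Real.cos_le_cos_of_nonneg_of_le_pi (abs_nonneg _) (by linarith) habs
  have hGf1 : ∀ x : EuclideanSpace ℝ (Fin (n+1)), 1 ≤ Gf β x := by
    intro x
    have h : (0:ℝ) ≤ ∑ m : Fin n, psi β (x m.castSucc) :=
      Finset.sum_nonneg fun m _ => (Real.cosh_pos _).le
    simp only [Gf]; linarith
  have hgpos : ∀ x ∈ closure Sig, 0 < gf α β δ x := by
    intro x hx
    exact mul_pos (lt_of_lt_of_le hc₀pos (hphi_lb _ (hclsub hx).1 (hclsub hx).2))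
      (lt_of_lt_of_le one_pos (hGf1 x))
  have hg_lb : ∀ x ∈ closure Sig, c₀ * Gf β x ≤ gf α β δ x := by
    intro x hx
    have h := hphi_lb (x (Fin.last n)) (hclsub hx).1 (hclsub hx).2
    have hG : (0:ℝ) ≤ Gf β x := by linarith [hGf1 x]
    exact mul_le_mul_of_nonneg_right h hG
  have hcosh_lb : ∀ s : ℝ, |s|/2 ≤ Real.cosh s := by
    intro s
    rcases abs_cases s with ⟨h1, _⟩ | ⟨h1, _⟩ <;> rw [Real.cosh_eq, h1]
    · linarith [Real.add_one_le_exp s, (Real.exp_pos (-s)).le]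
    · linarith [Real.add_one_le_exp (-s), (Real.exp_pos s).le]
  have hnorm_le : ∀ x : EuclideanSpace ℝ (Fin (n+1)), ‖x‖ ≤ ∑ i, ‖x i‖ := by
    intro x
    rw [EuclideanSpace.norm_eq]
    have h1 : ∑ i, ‖x i‖^2 ≤ (∑ i, ‖x i‖)^2 :=
      Finset.sum_sq_le_sq_sum_of_nonneg (fun i _ => norm_nonneg _)
    calc Real.sqrt (∑ i, ‖x i‖^2) ≤ Real.sqrt ((∑ i, ‖x i‖)^2) := Real.sqrt_le_sqrt h1
      _ = ∑ i, ‖x i‖ := Real.sqrt_sq (Finset.sum_nonneg fun i _ => norm_nonneg _)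
  have hGlow : ∀ x ∈ closure Sig, (β/2) * (‖x‖ - δ) ≤ Gf β x := by
    intro x hx
    have h1 : ∀ m : Fin n, (β/2) * ‖x m.castSucc‖ ≤ psi β (x m.castSucc) := by
      intro m
      have h := hcosh_lb (β * (x m.castSucc))
      have habs : |β * x m.castSucc| = β * |x m.castSucc| := by
        rw [abs_mul, abs_of_nonneg hβpos.le]
      show (β/2) * ‖x m.castSucc‖ ≤ Real.cosh (β * x m.castSucc)
      rw [Real.norm_eq_abs]
      calc (β/2) * |x m.castSucc| = |β * x m.castSucc|/2 := by rw [habs]; ring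
        _ ≤ _ := h
    have h2 : (β/2) * (∑ m : Fin n, ‖x m.castSucc‖) ≤ ∑ m : Fin n, psi β (x m.castSucc) := by
      rw [Finset.mul_sum]
      exact Finset.sum_le_sum fun m _ => h1 m
    have h4 := hnorm_le x
    rw [Fin.sum_univ_castSucc] at h4
    have h5 : ‖x (Fin.last n)‖ ≤ δ := by
      rw [Real.norm_eq_abs, abs_of_nonneg (hclsub hx).1]; exact (hclsub hx).2
    have h3 : ‖x‖ - δ ≤ ∑ m : Fin n, ‖x m.castSucc‖ := by linarith
    have h6 : (β/2) * (‖x‖ - δ) ≤ (β/2) * ∑ m : Fin n, ‖x m.castSucc‖ :=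
      mul_le_mul_of_nonneg_left h3 (by positivity)
    show (β/2) * (‖x‖ - δ) ≤ 1 + ∑ m : Fin n, psi β (x m.castSucc)
    linarith
  set v : EuclideanSpace ℝ (Fin (n+1)) → ℝ := fun x => w x / gf α β δ x with hv
  have hx0cl : x0 ∈ closure Sig := subset_closure (show x0 ∈ Sig from ⟨hx01, hx02⟩)
  have hgx0 : 0 < gf α β δ x0 := hgpos x0 hx0cl
  have hS0pos : 0 < v x0 := div_pos hpos hgx0
  have hMpos : 0 < M := lt_of_lt_of_le hpos ((le_abs_self _).trans (hM x0))
  clear_value v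
  set R := max (max ‖x0‖ δ) (δ + 4*M/(v x0 * c₀ * β)) with hR
  have hfar : ∀ x ∈ closure Sig, R < ‖x‖ → v x ≤ v x0/2 := by
    intro x hx hRx
    have hgx : 0 < gf α β δ x := hgpos x hx
    have hg2 : 2*M/(v x0) ≤ gf α β δ x := by
      have h1 := hGlow x hx
      have h2 := hg_lb x hx
      have hR2 : δ + 4*M/(v x0 * c₀ * β) < ‖x‖ :=
        lt_of_le_of_lt (le_max_right _ _) hRx
      have h3 : c₀ * ((β/2) * (4*M/(v x0 * c₀ * β))) = 2*M/(v x0) := by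
        field_simp
        ring
      have h4 : c₀ * ((β/2) * (‖x‖ - δ)) ≤ c₀ * Gf β x :=
        mul_le_mul_of_nonneg_left h1 hc₀pos.le
      have h8 : c₀ * ((β/2) * (4*M/(v x0 * c₀ * β))) ≤ c₀ * ((β/2) * (‖x‖ - δ)) := by
        apply mul_le_mul_of_nonneg_left _ hc₀pos.le
        apply mul_le_mul_of_nonneg_left _ (by linarith : (0:ℝ) ≤ β/2)
        linarith
      linarith
    have h5 : w x ≤ M := (le_abs_self _).trans (hM x)
    have h6 : v x ≤ M / gf α β δ x := by
      simp only [hv]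
      gcongr
    have h7 : M / gf α β δ x ≤ v x0 / 2 := by
      rw [div_le_iff₀ hgx]
      calc M = (v x0/2) * (2*M/(v x0)) := by field_simp
        _ ≤ (v x0/2) * gf α β δ x :=
          mul_le_mul_of_nonneg_left hg2 (by linarith)
    linarith
  set K := closure Sig ∩ Metric.closedBall 0 R with hK
  have hKcpt : IsCompact K :=
    (isCompact_closedBall (0 : EuclideanSpace ℝ (Fin (n+1))) R).inter_left isClosed_closure
  have hx0K : x0 ∈ K := by
    refine ⟨hx0cl, ?_⟩
    rw [Metric.mem_closedBall, dist_zero_right]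
    exact le_trans (le_max_left ‖x0‖ δ) (le_max_left _ _)
  have hgcont : Continuous (gf α β δ (n := n)) := (contDiff_gf α β δ).continuous
  have hvK : ContinuousOn v K := by
    rw [hv]
    exact (hwc.mono inter_subset_left).div (hgcont.continuousOn)
      (fun x hx => (hgpos x hx.1).ne')
  obtain ⟨z, hzK, hzmax⟩ := hKcpt.exists_isMaxOn ⟨x0, hx0K⟩ hvK
  have hS0S : v x0 ≤ v z := hzmax hx0K
  have hglob : ∀ x ∈ closure Sig, v x ≤ v z := by
    intro x hx
    by_cases hxR : ‖x‖ ≤ R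
    · exact hzmax ⟨hx, by rwa [Metric.mem_closedBall, dist_zero_right]⟩
    · push_neg at hxR
      linarith [hfar x hx hxR]
  have hgz : 0 < gf α β δ z := hgpos z hzK.1
  have hSpos : 0 < v z := lt_of_lt_of_le hS0pos hS0S
  have hwz : w z = v z * gf α β δ z := by
    rw [hv]; field_simp
  have hwzpos : 0 < w z := by rw [hwz]; exact mul_pos hSpos hgz
  have hzSig : z ∈ Sig := by
    by_contra hzn
    have hf : z ∈ frontier Sig := by
      rw [hopen.frontier_eq]
      exact ⟨hzK.1, hzn⟩
    linarith [hbdry z hf]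
  set S := v z with hS
  clear_value S
  set u : EuclideanSpace ℝ (Fin (n+1)) → ℝ := fun x => w x - S * gf α β δ x with hu
  have huz : u z = 0 := by
    simp only [hu]
    rw [hwz]
    ring
  have hulocal : IsLocalMax u z := by
    have hev : ∀ᶠ x in 𝓝 z, x ∈ Sig := hopen.eventually_mem hzSig
    show ∀ᶠ x in 𝓝 z, u x ≤ u z
    filter_upwards [hev] with x hxS
    have hxcl : x ∈ closure Sig := subset_closure hxS
    have hgx : 0 < gf α β δ x := hgpos x hxcl
    have h1 : v x ≤ S := hglob x hxcl
    have h2 : w x ≤ S * gf α β δ x := by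
      rw [hv] at h1
      exact (div_le_iff₀ hgx).mp h1
    rw [huz]
    simp only [hu]
    linarith
  have huC2 : ContDiffOn ℝ 2 u Sig :=
    hw2.sub ((contDiff_const.mul (contDiff_gf α β δ)).contDiffOn)
  have hlapu : lap u z ≤ 0 := lap_nonpos_of_isLocalMax hopen hzSig huC2 hulocal
  have hgC1 : ContDiff ℝ 1 (fderiv ℝ (gf α β δ (n := n))) :=
    (contDiff_gf α β δ).fderiv_right (by norm_num)
  have hwfd : ContDiffOn ℝ 1 (fderiv ℝ w) Sig := hw2.fderiv_of_isOpen hopen (by norm_num)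
  have hlapdec : lap u z = lap w z - S * lap (gf α β δ) z := by
    unfold lap
    rw [Finset.mul_sum, ← Finset.sum_sub_distrib]
    apply Finset.sum_congr rfl
    intro k _
    have hAdiff : DifferentiableAt ℝ
        (fun y => fderiv ℝ w y (EuclideanSpace.single k 1)) z :=
      (((hwfd z hzSig).differentiableWithinAt one_ne_zero).differentiableAt
        (hopen.mem_nhds hzSig)).clm_apply (differentiableAt_const _)
    have hBdiff : DifferentiableAt ℝ
        (fun y => fderiv ℝ (gf α β δ) y (EuclideanSpace.single k 1)) z :=
      ((hgC1.differentiable one_ne_zero) z).clm_apply (differentiableAt_const _)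
    have heq' : (fun y => fderiv ℝ u y (EuclideanSpace.single k 1))
        =ᶠ[𝓝 z] (fun y => fderiv ℝ w y (EuclideanSpace.single k 1)
          - S * fderiv ℝ (gf α β δ) y (EuclideanSpace.single k 1)) := by
      filter_upwards [hopen.eventually_mem hzSig] with y hy
      have hwy : DifferentiableAt ℝ w y :=
        ((hw2.differentiableOn (by norm_num)) y hy).differentiableAt (hopen.mem_nhds hy)
      have hgy : DifferentiableAt ℝ (gf α β δ (n := n)) y :=
        (contDiff_gf α β δ).differentiable (by norm_num) y
      have h1 : HasFDerivAt u (fderiv ℝ w y - S • fderiv ℝ (gf α β δ) y) y :=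
        (hwy.hasFDerivAt).sub ((hgy.hasFDerivAt).const_mul S)
      rw [h1.fderiv]
      simp
    rw [heq'.fderiv_eq]
    have h2 : HasFDerivAt (fun y => fderiv ℝ w y (EuclideanSpace.single k 1)
        - S * fderiv ℝ (gf α β δ) y (EuclideanSpace.single k 1))
        (fderiv ℝ (fun y => fderiv ℝ w y (EuclideanSpace.single k 1)) z
          - S • fderiv ℝ (fun y => fderiv ℝ (gf α β δ) y (EuclideanSpace.single k 1)) z) z :=
      (hAdiff.hasFDerivAt).sub ((hBdiff.hasFDerivAt).const_mul S)
    rw [h2.fderiv]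
    simp
  have heqz : lap w z = -(c z * w z) := by
    have h := heq z hzSig.1 hzSig.2
    linarith
  have hlapg := lap_gf α β δ (n := n) z
  have hphiz : c₀ ≤ phi α δ (z (Fin.last n)) := hphi_lb _ hzSig.1.le hzSig.2.le
  have hphizpos : 0 < phi α δ (z (Fin.last n)) := lt_of_lt_of_le hc₀pos hphiz
  have hG1 : 1 ≤ Gf β z := hGf1 z
  have hcz : c z ≤ C0 := (le_abs_self _).trans (hc z)
  have hgfz : gf α β δ z = phi α δ (z (Fin.last n)) * Gf β z := rfl
  have hGpos : 0 < Gf β z := by linarith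
  have e1 : lap w z = -(c z * (S * (phi α δ (z (Fin.last n)) * Gf β z))) := by
    rw [heqz, hwz, hgfz]
  have e3 : (0:ℝ) ≥ -(c z * (S * (phi α δ (z (Fin.last n)) * Gf β z)))
      - S * (-(α^2) * phi α δ (z (Fin.last n)) * Gf β z
        + β^2 * phi α δ (z (Fin.last n)) * (Gf β z - 1)) := by
    rw [← e1, ← hlapg]
    linarith [hlapu, hlapdec]
  have hε0eq : α^2 - C0 = ε0 := by rw [hε0]
  set P := phi α δ (z (Fin.last n)) with hP
  set G := Gf β z with hG
  have e3' : (0:ℝ) ≤ S * (P * (c z * G - α^2 * G + β^2 * G - β^2)) := by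
    nlinarith only [e3]
  have m1 : c z * G ≤ C0 * G := mul_le_mul_of_nonneg_right hcz hGpos.le
  have m2 : P * (c z * G) ≤ P * (C0 * G) := mul_le_mul_of_nonneg_left m1 hphizpos.le
  have m3 : S * (P * (c z * G)) ≤ S * (P * (C0 * G)) := mul_le_mul_of_nonneg_left m2 hSpos.le
  have final : (0:ℝ) ≤ S * (P * (C0 * G - α^2 * G + β^2 * G - β^2)) := by
    nlinarith only [e3', m3]
  have hscalar : C0 - α^2 + β^2 = -(ε0/2) := by
    rw [hβ2]; linarith
  have m4 : C0 * G - α^2 * G + β^2 * G - β^2 = -(ε0/2) * G - ε0/2 := by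
    calc C0 * G - α^2 * G + β^2 * G - β^2 = (C0 - α^2 + β^2) * G - β^2 := by ring
      _ = -(ε0/2) * G - ε0/2 := by rw [hscalar, hβ2]
  rw [m4] at final
  have m5 : -(ε0/2) * G - ε0/2 < 0 := by
    have h := mul_pos (by linarith : (0:ℝ) < ε0/2) hGpos
    linarith
  have m6 : S * (P * (-(ε0/2) * G - ε0/2)) < 0 :=
    mul_neg_of_pos_of_neg hSpos (mul_neg_of_pos_of_neg hphizpos m5)
  linarith only [final, m6]
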